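/- Let G be a finitely generated group with polynomial volume-growth of degree d, let B be a finite symmetric generating set containing 1_G, and let G act on a set X. Equip X with the extended metric ρ where ρ(x,y) is the least word length (with respect to B) of a group element sending x to y, and +∞ if no such element exists. Then for every t > 1 and r_0 > 0 there is r ≥ r_0 such that for every x ∈ X, the ball B(x; rt) contains at most 2(t+1)^d pairwise disjoint balls of radius r. -/

import Mathlib

open scoped Pointwise ENNReal

lemma aux_pigeonhole (v : ℕ → ℝ) (hv1 : ∀ n, 1 ≤ v n)
    (c : ℝ) (hc : 0 < c) (d : ℕ) (t : ℝ) (ht : 1 < t)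
    (hub : ∀ n : ℕ, 1 ≤ n → v n ≤ c * (n : ℝ) ^ d)
    (n₀ : ℕ) (hn₀ : 1 ≤ n₀) :
    ∃ n : ℕ, n₀ ≤ n ∧ v (n + ⌈(n : ℝ) * t⌉₊) ≤ 2 * (t + 1) ^ d * v n := by
  by_contra hcon
  push_neg at hcon
  have ht0 : (0:ℝ) < t + 1 := by linarith
  have hQ : (0:ℝ) < 2 * (t + 1) ^ d := by positivity
  set f : ℕ → ℕ := fun k => (fun n : ℕ => n + ⌈(n : ℝ) * t⌉₊)^[k] n₀ with hf
  have hfs : ∀ k, f (k + 1) = f k + ⌈(f k : ℝ) * t⌉₊ := by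
    intro k
    simp [hf, Function.iterate_succ_apply']
  have hfge : ∀ k, n₀ ≤ f k := by
    intro k
    induction k with
    | zero => simp [hf]
    | succ k ih => rw [hfs k]; omega
  -- lower bound on v (f k)
  have hlow : ∀ k, (2 * (t + 1) ^ d) ^ k ≤ v (f k) := by
    intro k
    induction k with
    | zero => simpa using hv1 (f 0)
    | succ k ih =>
      have h1 := hcon (f k) (hfge k)
      rw [hfs k]
      calc (2 * (t + 1) ^ d) ^ (k+1) = (2 * (t + 1) ^ d) ^ k * (2 * (t + 1) ^ d) := by ring
        _ ≤ v (f k) * (2 * (t + 1) ^ d) := by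
            apply mul_le_mul_of_nonneg_right ih hQ.le
        _ ≤ v (f k + ⌈(f k : ℝ) * t⌉₊) := by nlinarith [hv1 (f k)]
  -- upper bound on f k
  have hup : ∀ k, (f k : ℝ) ≤ (n₀ + 1) * (t + 1) ^ k - 1 := by
    intro k
    induction k with
    | zero => simp [hf]
    | succ k ih =>
      have hceil : (⌈(f k : ℝ) * t⌉₊ : ℝ) ≤ (f k : ℝ) * t + 1 :=
        (Nat.ceil_lt_add_one (by positivity)).le
      have : (f (k+1) : ℝ) ≤ (f k : ℝ) * (t + 1) + 1 := by
        rw [hfs k]; push_cast; linarith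
      have hpow : (0:ℝ) < (t+1)^k := by positivity
      calc (f (k+1) : ℝ) ≤ (f k : ℝ) * (t + 1) + 1 := this
        _ ≤ ((n₀ + 1) * (t + 1) ^ k - 1) * (t + 1) + 1 := by nlinarith
        _ = (n₀ + 1) * (t + 1) ^ (k+1) - t := by ring
        _ ≤ (n₀ + 1) * (t + 1) ^ (k+1) - 1 := by linarith
  -- combine
  obtain ⟨K, hK⟩ := pow_unbounded_of_one_lt (c * ((n₀:ℝ) + 1) ^ d) (y := 2) one_lt_two
  have h1 : 1 ≤ f K := le_trans hn₀ (hfge K)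
  have h2 : v (f K) ≤ c * ((n₀ + 1) * (t + 1) ^ K) ^ d := by
    refine (hub (f K) h1).trans ?_
    apply mul_le_mul_of_nonneg_left _ hc.le
    apply pow_le_pow_left₀ (by positivity)
    have := hup K
    linarith
  have h3 := (hlow K).trans h2
  have e1 : (2 * (t+1)^d)^K = (2:ℝ)^K * ((t+1)^d)^K := mul_pow _ _ _
  have e2 : c * (((n₀:ℝ) + 1) * (t + 1) ^ K) ^ d = (c * ((n₀:ℝ) + 1) ^ d) * ((t+1)^d)^K := by
    rw [mul_pow, ← pow_mul, mul_comm K d, pow_mul]; ring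
  rw [e1, e2] at h3
  have hpowpos : (0:ℝ) < ((t+1)^d)^K := by positivity
  have h5 : (2:ℝ)^K ≤ c * ((n₀:ℝ) + 1) ^ d := (mul_le_mul_iff_of_pos_right hpowpos).mp h3
  linarith

/-- Bounded packing for actions of groups of polynomial volume-growth:
for every `t > 1` and `r₀ > 0` there is `r ≥ r₀` so that every ball of radius `rt`
contains at most `2(t+1)^d` pairwise disjoint balls of radius `r`. -/
theorem stmt2 {G X : Type*} [Group G] [DecidableEq G] [MulAction G X]
    (B : Finset G) (hB1 : (1 : G) ∈ B) (hBsymm : B⁻¹ = B)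
    (hgen : Subgroup.closure (B : Set G) = ⊤)
    (d : ℕ) (c : ℝ) (hc : 0 < c)
    (hgrowth : ∀ r : ℕ, 1 ≤ r → ((B ^ r).card : ℝ) ≤ c * (r : ℝ) ^ d)
    (ρ : X → X → ℝ≥0∞)
    (hρ : ∀ x y : X, ρ x y = ⨅ (n : ℕ) (_ : ∃ g ∈ B ^ n, g • x = y), (n : ℝ≥0∞)) :
    ∀ t : ℝ, 1 < t → ∀ r₀ : ℝ, 0 < r₀ → ∃ r : ℝ, r₀ ≤ r ∧
      ∀ (x : X) (s : Finset X),
        -- each ball of radius `r` centered in `s` is contained in `B(x; rt)`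
        (∀ y ∈ s, ∀ z : X, ρ y z ≤ ENNReal.ofReal r → ρ x z ≤ ENNReal.ofReal (r * t)) →
        -- the balls of radius `r` centered at points of `s` are pairwise disjoint
        (∀ y₁ ∈ s, ∀ y₂ ∈ s, y₁ ≠ y₂ →
          ∀ z : X, ¬(ρ y₁ z ≤ ENNReal.ofReal r ∧ ρ y₂ z ≤ ENNReal.ofReal r)) →
        (s.card : ℝ) ≤ 2 * (t + 1) ^ d := by
  intro t ht r₀ hr₀
  have hv1 : ∀ m : ℕ, (1 : ℝ) ≤ ((B ^ m).card : ℝ) := by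
    intro m
    have : (B ^ m).Nonempty := ⟨1, Finset.one_mem_pow hB1⟩
    exact_mod_cast Finset.card_pos.mpr this
  obtain ⟨n, hn₀, hgood⟩ := aux_pigeonhole (fun m => ((B ^ m).card : ℝ)) hv1 c hc d t ht
    hgrowth (max ⌈r₀⌉₊ 1) (le_max_right _ _)
  set M := ⌈(n : ℝ) * t⌉₊ with hM
  refine ⟨(n : ℝ), ?_, ?_⟩
  · calc r₀ ≤ (⌈r₀⌉₊ : ℝ) := Nat.le_ceil r₀
      _ ≤ ((max ⌈r₀⌉₊ 1 : ℕ) : ℝ) := by exact_mod_cast le_max_left _ _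
      _ ≤ (n : ℝ) := by exact_mod_cast hn₀
  intro x s hsub hdisj
  -- basic distance facts
  have hle : ∀ (y z : X) (m : ℕ), (∃ g ∈ B ^ m, g • y = z) → ρ y z ≤ (m : ℝ≥0∞) := by
    intro y z m h
    rw [hρ]
    exact iInf₂_le m h
  have hself : ∀ y : X, ρ y y = 0 := by
    intro y
    refine le_antisymm ?_ zero_le
    have := hle y y 0 ⟨1, by simp, one_smul G y⟩
    simpa using this
  -- each center has a group element of length ≤ M sending x to it
  have hxy : ∀ y ∈ s, ∃ g ∈ B ^ M, g • x = y := by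
    intro y hy
    have h1 : ρ x y ≤ ENNReal.ofReal ((n : ℝ) * t) := by
      apply hsub y hy y
      rw [hself]
      exact zero_le
    have h2 : ρ x y < ((M + 1 : ℕ) : ℝ≥0∞) := by
      refine lt_of_le_of_lt h1 ?_
      calc ENNReal.ofReal ((n : ℝ) * t) ≤ ENNReal.ofReal (M : ℝ) :=
            ENNReal.ofReal_le_ofReal (Nat.le_ceil _)
        _ = (M : ℝ≥0∞) := ENNReal.ofReal_natCast M
        _ < ((M + 1 : ℕ) : ℝ≥0∞) := by exact_mod_cast Nat.lt_succ_self M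
    rw [hρ] at h2
    simp only [iInf_lt_iff] at h2
    obtain ⟨m, ⟨g, hgB, hgx⟩, hm⟩ := h2
    have hmM : m ≤ M := by
      have : (m : ℝ≥0∞) < ((M + 1 : ℕ) : ℝ≥0∞) := hm
      exact_mod_cast Nat.lt_succ_iff.mp (by exact_mod_cast this)
    exact ⟨g, Finset.pow_subset_pow_right hB1 hmM hgB, hgx⟩
  have hgfun : ∀ y : X, ∃ g : G, y ∈ s → g ∈ B ^ M ∧ g • x = y := by
    intro y
    by_cases hy : y ∈ s
    · obtain ⟨g, hg1, hg2⟩ := hxy y hy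
      exact ⟨g, fun _ => ⟨hg1, hg2⟩⟩
    · exact ⟨1, fun h => absurd h hy⟩
  choose g hg using hgfun
  set T : X → Finset G := fun y => (B ^ n).image (· * g y) with hT
  have hTcard : ∀ y, (T y).card = (B ^ n).card := by
    intro y
    exact Finset.card_image_of_injective _ (mul_left_injective (g y))
  have hTsub : ∀ y ∈ s, T y ⊆ B ^ (n + M) := by
    intro y hy a ha
    obtain ⟨h, hh, rfl⟩ := Finset.mem_image.mp ha
    rw [pow_add]
    exact Finset.mul_mem_mul hh ((hg y hy).1)
  have hTdisj : ∀ y₁ ∈ s, ∀ y₂ ∈ s, y₁ ≠ y₂ → Disjoint (T y₁) (T y₂) := by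
    intro y₁ hy₁ y₂ hy₂ hne
    rw [Finset.disjoint_left]
    intro a ha₁ ha₂
    obtain ⟨h₁, hh₁, he₁⟩ := Finset.mem_image.mp ha₁
    obtain ⟨h₂, hh₂, he₂⟩ := Finset.mem_image.mp ha₂
    have hball : ∀ (y : X), y ∈ s → ∀ h : G, h ∈ B ^ n → h * g y = a →
        ρ y (a • x) ≤ ENNReal.ofReal (n : ℝ) := by
      intro y hy h hh he
      rw [ENNReal.ofReal_natCast]
      apply hle y (a • x) n
      refine ⟨h, hh, ?_⟩
      rw [← (hg y hy).2, ← mul_smul, he]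
    exact hdisj y₁ hy₁ y₂ hy₂ hne (a • x)
      ⟨hball y₁ hy₁ h₁ hh₁ he₁, hball y₂ hy₂ h₂ hh₂ he₂⟩
  -- counting
  have hcount : s.card * (B ^ n).card ≤ (B ^ (n + M)).card := by
    calc s.card * (B ^ n).card = ∑ y ∈ s, (T y).card := by
          rw [Finset.sum_congr rfl fun y _ => hTcard y, Finset.sum_const, smul_eq_mul]
      _ = (s.biUnion T).card := (Finset.card_biUnion hTdisj).symm
      _ ≤ (B ^ (n + M)).card := by
          apply Finset.card_le_card
          intro a ha
          obtain ⟨y, hy, hay⟩ := Finset.mem_biUnion.mp ha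
          exact hTsub y hy hay
  have hcountR : (s.card : ℝ) * ((B ^ n).card : ℝ) ≤ ((B ^ (n + M)).card : ℝ) := by
    exact_mod_cast hcount
  have hpos : (0 : ℝ) < ((B ^ n).card : ℝ) := lt_of_lt_of_le one_pos (hv1 n)
  have := hcountR.trans hgood
  exact (mul_le_mul_iff_of_pos_right hpos).mp this
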